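/- If P₁,…,P_N ∈ ℝ^{n×n} are symmetric positive definite matrices with P_i − A_iᵀ P_j A_i positive definite for all i,j, then for any convex-combination weights μ ∈ ℝ^N with μ_i ≥ 0 and Σ μ_i = 1, and any weights ν with the same properties, the matrix (Σ_i μ_i P_i) − A(μ)ᵀ (Σ_j ν_j P_j) A(μ) is positive definite, where A(μ) = Σ_i μ_i A_i. -/

import Mathlib

open Matrix

private lemma dot_sum_right {n N : ℕ} (x : Fin n → ℝ) (v : Fin N → Fin n → ℝ) :
    x ⬝ᵥ (∑ i, v i) = ∑ i, x ⬝ᵥ v i := by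
  simp only [dotProduct, Finset.sum_apply, Finset.mul_sum]
  rw [Finset.sum_comm]

private lemma sum_smul_mulVec {n N : ℕ} (M : Fin N → Matrix (Fin n) (Fin n) ℝ)
    (c : Fin N → ℝ) (x : Fin n → ℝ) :
    (∑ i, c i • M i) *ᵥ x = ∑ i, c i • (M i *ᵥ x) := by
  ext k
  simp only [mulVec, dotProduct, Finset.sum_apply, Matrix.sum_apply, Matrix.smul_apply,
    Finset.sum_mul, Pi.smul_apply, smul_eq_mul, Finset.mul_sum, mul_assoc]
  rw [Finset.sum_comm]

private lemma dot_sum_left {n N : ℕ} (x : Fin n → ℝ) (v : Fin N → Fin n → ℝ) :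
    (∑ i, v i) ⬝ᵥ x = ∑ i, v i ⬝ᵥ x := by
  simp only [dotProduct, Finset.sum_apply, Finset.sum_mul]
  rw [Finset.sum_comm]

private lemma mulVec_sum_right {n N : ℕ} (M : Matrix (Fin n) (Fin n) ℝ)
    (v : Fin N → Fin n → ℝ) :
    M *ᵥ (∑ i, v i) = ∑ i, M *ᵥ v i := by
  ext k
  simp only [mulVec, dotProduct, Finset.sum_apply, Finset.mul_sum]
  rw [Finset.sum_comm]

private lemma convex_avg {N : ℕ} (μ g : Fin N → ℝ) (hμ1 : ∑ i, μ i = 1) :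
    ∑ i, ∑ l, μ i * μ l * ((g i + g l) / 2) = ∑ i, μ i * g i := by
  have h1 : ∀ i, (∑ l, μ i * μ l * ((g i + g l) / 2))
      = μ i * g i / 2 + μ i / 2 * (∑ l, μ l * g l) := by
    intro i
    rw [Finset.sum_congr rfl fun l (_ : l ∈ Finset.univ) =>
      show μ i * μ l * ((g i + g l) / 2)
        = μ i * g i / 2 * μ l + μ i / 2 * (μ l * g l) from by ring,
      Finset.sum_add_distrib, ← Finset.mul_sum, ← Finset.mul_sum, hμ1, mul_one]
  rw [Finset.sum_congr rfl fun i _ => h1 i, Finset.sum_add_distrib,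
    ← Finset.sum_div, ← Finset.sum_mul]
  rw [show (∑ i, μ i / 2) = (∑ i, μ i) / 2 from (Finset.sum_div _ _ _).symm, hμ1]
  ring

theorem poly_qs_convexification {n N : ℕ}
    (A P : Fin N → Matrix (Fin n) (Fin n) ℝ)
    (hPsym : ∀ i, (P i).IsSymm) (hPpd : ∀ i, (P i).PosDef)
    (hdec : ∀ i j, (P i - (A i)ᵀ * P j * A i).PosDef)
    (μ ν : Fin N → ℝ) (hμ : ∀ i, 0 ≤ μ i) (hμ1 : ∑ i, μ i = 1)
    (hν : ∀ i, 0 ≤ ν i) (hν1 : ∑ i, ν i = 1) :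
    ((∑ i, μ i • P i) - (∑ i, μ i • A i)ᵀ * (∑ j, ν j • P j) * (∑ i, μ i • A i)).PosDef := by
  set B := ∑ i, μ i • A i with hB
  set Q := ∑ j, ν j • P j with hQ
  have hQsym : Qᵀ = Q := by
    rw [hQ, transpose_sum]
    exact Finset.sum_congr rfl fun j _ => by rw [transpose_smul, hPsym j]
  have hQform : ∀ u w : Fin n → ℝ, u ⬝ᵥ Q *ᵥ w = ∑ j, ν j * (u ⬝ᵥ P j *ᵥ w) := by
    intro u w
    rw [hQ, sum_smul_mulVec, dot_sum_right]
    exact Finset.sum_congr rfl fun j _ => by rw [dotProduct_smul, smul_eq_mul]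
  have hPq : ∀ (j : Fin N) (u : Fin n → ℝ), 0 ≤ u ⬝ᵥ P j *ᵥ u := by
    intro j u
    have := (hPpd j).posSemidef.dotProduct_mulVec_nonneg u
    simpa using this
  have hQpsd : ∀ u : Fin n → ℝ, 0 ≤ u ⬝ᵥ Q *ᵥ u := by
    intro u
    rw [hQform]
    exact Finset.sum_nonneg fun j _ => mul_nonneg (hν j) (hPq j u)
  have hQbs : ∀ u w : Fin n → ℝ, u ⬝ᵥ Q *ᵥ w = w ⬝ᵥ Q *ᵥ u := by
    intro u w
    rw [dotProduct_mulVec, ← mulVec_transpose, hQsym, dotProduct_comm]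
  have hconj : ∀ (M C : Matrix (Fin n) (Fin n) ℝ) (u : Fin n → ℝ),
      u ⬝ᵥ (Cᵀ * M * C) *ᵥ u = (C *ᵥ u) ⬝ᵥ M *ᵥ (C *ᵥ u) := by
    intro M C u
    rw [← mulVec_mulVec, ← mulVec_mulVec, dotProduct_mulVec, vecMul_transpose]
  rw [posDef_iff_dotProduct_mulVec]
  constructor
  · -- Hermitian part
    rw [IsHermitian, conjTranspose_eq_transpose_of_trivial, transpose_sub, transpose_sum]
    congr 1
    · exact Finset.sum_congr rfl fun i _ => by rw [transpose_smul, hPsym i]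
    · rw [transpose_mul, transpose_mul, transpose_transpose, hQsym, Matrix.mul_assoc]
  · intro x hx
    set f : Fin N → Fin n → ℝ := fun i => A i *ᵥ x with hf
    have key : (star x) ⬝ᵥ ((∑ i, μ i • P i) - Bᵀ * Q * B) *ᵥ x
        = (∑ i, μ i * (x ⬝ᵥ P i *ᵥ x)) - (B *ᵥ x) ⬝ᵥ Q *ᵥ (B *ᵥ x) := by
      have h1 : x ⬝ᵥ (∑ i, μ i • P i) *ᵥ x = ∑ i, μ i * (x ⬝ᵥ P i *ᵥ x) := by
        rw [sum_smul_mulVec, dot_sum_right]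
        exact Finset.sum_congr rfl fun i _ => by rw [dotProduct_smul, smul_eq_mul]
      rw [show (star x) = x from rfl]
      rw [sub_mulVec, dotProduct_sub, h1, hconj]
    rw [key]
    have hy : B *ᵥ x = ∑ i, μ i • f i := by
      rw [hB, sum_smul_mulVec]
    have hcross : (B *ᵥ x) ⬝ᵥ Q *ᵥ (B *ᵥ x)
        = ∑ i, ∑ l, μ i * μ l * (f i ⬝ᵥ Q *ᵥ f l) := by
      rw [hy, dot_sum_left]
      refine Finset.sum_congr rfl fun i _ => ?_
      rw [smul_dotProduct, mulVec_sum_right, dot_sum_right, smul_eq_mul, Finset.mul_sum]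
      refine Finset.sum_congr rfl fun l _ => ?_
      rw [mulVec_smul, dotProduct_smul, smul_eq_mul]
      ring
    -- convexity bound
    have hconv : (B *ᵥ x) ⬝ᵥ Q *ᵥ (B *ᵥ x) ≤ ∑ i, μ i * (f i ⬝ᵥ Q *ᵥ f i) := by
      rw [hcross, ← convex_avg μ (fun i => f i ⬝ᵥ Q *ᵥ f i) hμ1]
      refine Finset.sum_le_sum fun i _ => Finset.sum_le_sum fun l _ => ?_
      refine mul_le_mul_of_nonneg_left ?_ (mul_nonneg (hμ i) (hμ l))
      have h0 := hQpsd (f i - f l)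
      have hexp : (f i - f l) ⬝ᵥ Q *ᵥ (f i - f l)
          = f i ⬝ᵥ Q *ᵥ f i - 2 * (f i ⬝ᵥ Q *ᵥ f l) + f l ⬝ᵥ Q *ᵥ f l := by
        rw [mulVec_sub, sub_dotProduct, dotProduct_sub, dotProduct_sub, hQbs (f l) (f i)]
        ring
      rw [hexp] at h0
      linarith
    -- each vertex term is positive
    have hpos : ∀ i j, 0 < x ⬝ᵥ (P i - (A i)ᵀ * P j * A i) *ᵥ x := by
      intro i j
      have := (hdec i j).dotProduct_mulVec_pos hx
      simpa using this
    have hterm : ∀ i j, x ⬝ᵥ (P i - (A i)ᵀ * P j * A i) *ᵥ x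
        = x ⬝ᵥ P i *ᵥ x - f i ⬝ᵥ P j *ᵥ f i := by
      intro i j
      rw [sub_mulVec, dotProduct_sub, hconj]
    -- rewrite the lower bound as a positive double sum
    have hfin : (∑ i, μ i * (x ⬝ᵥ P i *ᵥ x)) - (∑ i, μ i * (f i ⬝ᵥ Q *ᵥ f i))
        = ∑ i, μ i * (∑ j, ν j * (x ⬝ᵥ (P i - (A i)ᵀ * P j * A i) *ᵥ x)) := by
      rw [← Finset.sum_sub_distrib]
      refine Finset.sum_congr rfl fun i _ => ?_
      rw [← mul_sub]
      congr 1
      have h3 : (∑ j, ν j * (x ⬝ᵥ (P i - (A i)ᵀ * P j * A i) *ᵥ x))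
          = ∑ j, (ν j * (x ⬝ᵥ P i *ᵥ x) - ν j * (f i ⬝ᵥ P j *ᵥ f i)) := by
        refine Finset.sum_congr rfl fun j _ => ?_
        rw [hterm i j, mul_sub]
      rw [h3, Finset.sum_sub_distrib, ← Finset.sum_mul, hν1, one_mul, hQform (f i) (f i)]
    -- find strictly positive weights
    obtain ⟨i0, _, hi0⟩ := Finset.exists_lt_of_sum_lt
      (show (∑ i : Fin N, (0 : ℝ)) < ∑ i, μ i by simp [hμ1])
    obtain ⟨j0, _, hj0⟩ := Finset.exists_lt_of_sum_lt
      (show (∑ j : Fin N, (0 : ℝ)) < ∑ j, ν j by simp [hν1])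
    have hinner : ∀ i, 0 < ∑ j, ν j * (x ⬝ᵥ (P i - (A i)ᵀ * P j * A i) *ᵥ x) := by
      intro i
      refine Finset.sum_pos' (fun j _ => mul_nonneg (hν j) (hpos i j).le)
        ⟨j0, Finset.mem_univ _, mul_pos hj0 (hpos i j0)⟩
    have hdouble : 0 < ∑ i, μ i * (∑ j, ν j * (x ⬝ᵥ (P i - (A i)ᵀ * P j * A i) *ᵥ x)) :=
      Finset.sum_pos' (fun i _ => mul_nonneg (hμ i) (hinner i).le)
        ⟨i0, Finset.mem_univ _, mul_pos hi0 (hinner i0)⟩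
    have := hfin ▸ hdouble
    linarith [hconv]
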